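/- Let V_0, …, V_{K−1} be subspaces of a finite-dimensional vector space over a field, indexed cyclically (indices mod K), and let α_j = Σ_{i=0}^{K−1} dim⟨V_i, V_{i+1}, …, V_{i+j−1}⟩ (the span of the union of j cyclically consecutive subspaces). Suppose that for every i, the subspace V_{i+m+1} intersects ⟨V_i, …, V_{i+j−2}⟩ only in {0} for all 2 ≤ j ≤ m+1. Then α_j ≥ ((m+j)/(m+1))·α_1 for all 2 ≤ j ≤ m+1. -/

import Mathlib

set_option linter.unusedSectionVars false

open Module Submodule
open Fin.NatCast

section Aux
open Fin.CommRing

variable {F W : Type*} [Field F] [AddCommGroup W] [Module F W] [FiniteDimensional F W]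
variable {K : ℕ} [NeZero K]

private def fspan (V : Fin K → Submodule F W) (j : ℕ) (i : Fin K) : Submodule F W :=
  ⨆ s : Fin j, V (i + ((s : ℕ) : Fin K))

private lemma fspan_one (V : Fin K → Submodule F W) (i : Fin K) : fspan V 1 i = V i := by
  simp [fspan]

private lemma fspan_succ_last (V : Fin K → Submodule F W) (j : ℕ) (i : Fin K) :
    fspan V (j+1) i = fspan V j i ⊔ V (i + ((j : ℕ) : Fin K)) := by
  apply le_antisymm
  · apply iSup_le
    intro s
    induction s using Fin.lastCases with
    | last =>
        rw [Fin.val_last]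
        exact le_sup_right
    | cast t =>
        rw [Fin.coe_castSucc]
        exact le_sup_of_le_left (le_iSup (fun u : Fin j => V (i + ((u : ℕ) : Fin K))) t)
  · apply sup_le
    · apply iSup_le
      intro t
      have h := le_iSup (fun u : Fin (j+1) => V (i + ((u : ℕ) : Fin K))) t.castSucc
      rwa [Fin.coe_castSucc] at h
    · have h := le_iSup (fun u : Fin (j+1) => V (i + ((u : ℕ) : Fin K))) (Fin.last j)
      rwa [Fin.val_last] at h

private lemma fspan_succ_first (V : Fin K → Submodule F W) (j : ℕ) (i : Fin K) :
    fspan V (j+1) i = V i ⊔ fspan V j (i+1) := by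
  apply le_antisymm
  · apply iSup_le
    intro s
    induction s using Fin.cases with
    | zero =>
        have h0 : i + (((0 : Fin (j+1)) : ℕ) : Fin K) = i := by simp
        rw [h0]; exact le_sup_left
    | succ t =>
        have h1 : i + (((t.succ : Fin (j+1)) : ℕ) : Fin K) = (i+1) + ((t : ℕ) : Fin K) := by
          rw [Fin.val_succ]; push_cast; ring
        rw [h1]
        exact le_sup_of_le_right (le_iSup (fun u : Fin j => V ((i+1) + ((u : ℕ) : Fin K))) t)
  · apply sup_le
    · have h := le_iSup (fun u : Fin (j+1) => V (i + ((u : ℕ) : Fin K))) 0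
      simpa [fspan] using h
    · apply iSup_le
      intro t
      have h := le_iSup (fun u : Fin (j+1) => V (i + ((u : ℕ) : Fin K))) t.succ
      have h1 : i + (((t.succ : Fin (j+1)) : ℕ) : Fin K) = (i+1) + ((t : ℕ) : Fin K) := by
        rw [Fin.val_succ]; push_cast; ring
      rwa [h1] at h

private lemma fspan_mono_succ (V : Fin K → Submodule F W) (j : ℕ) (i : Fin K) :
    fspan V j i ≤ fspan V (j+1) i := by
  rw [fspan_succ_last]; exact le_sup_left

private lemma fspan_shift_le (V : Fin K → Submodule F W) (j : ℕ) (i : Fin K) :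
    fspan V j (i+1) ≤ fspan V (j+1) i := by
  rw [fspan_succ_first]; exact le_sup_right

private lemma V_le_fspan (V : Fin K → Submodule F W) (j : ℕ) (i : Fin K) :
    V i ≤ fspan V (j+1) i := by
  have h := le_iSup (fun u : Fin (j+1) => V (i + ((u : ℕ) : Fin K))) 0
  simpa [fspan] using h

/-- concavity per index -/
private lemma key1 (V : Fin K → Submodule F W) (j : ℕ) (i : Fin K) :
    finrank F (fspan V (j+2) i) + finrank F (fspan V j (i+1)) ≤
      finrank F (fspan V (j+1) i) + finrank F (fspan V (j+1) (i+1)) := by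
  have heq := Submodule.finrank_sup_add_finrank_inf_eq (fspan V (j+1) i) (fspan V (j+1) (i+1))
  have h1 : fspan V (j+2) i ≤ fspan V (j+1) i ⊔ fspan V (j+1) (i+1) := by
    rw [show j + 2 = (j+1) + 1 from rfl, fspan_succ_first]
    exact sup_le (le_sup_of_le_left (V_le_fspan V j i)) le_sup_right
  have h2 : fspan V j (i+1) ≤ fspan V (j+1) i ⊓ fspan V (j+1) (i+1) :=
    le_inf (fspan_shift_le V j i) (fspan_mono_succ V j (i+1))
  have := add_le_add (Submodule.finrank_mono h1) (Submodule.finrank_mono h2)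
  omega

/-- independence inequality per index -/
private lemma key2 (V : Fin K → Submodule F W) (m : ℕ) (i : Fin K)
    (hbot : fspan V m i ⊓ V (i + (((m+1 : ℕ)) : Fin K)) = ⊥) :
    finrank F (fspan V m i) + finrank F (V (i + (((m+1 : ℕ)) : Fin K)))
        + finrank F (fspan V m (i+1)) ≤
      finrank F (fspan V (m+1) i) + finrank F (fspan V (m+1) (i+1)) := by
  have heq := Submodule.finrank_sup_add_finrank_inf_eq (fspan V (m+1) i) (fspan V (m+1) (i+1))
  have hVle : V (i + (((m+1 : ℕ)) : Fin K)) ≤ fspan V (m+1) (i+1) := by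
    have h := le_iSup (fun u : Fin (m+1) => V ((i+1) + ((u : ℕ) : Fin K))) (Fin.last m)
    have h1 : (i+1) + (((Fin.last m : Fin (m+1)) : ℕ) : Fin K) = i + (((m+1 : ℕ)) : Fin K) := by
      rw [Fin.val_last]; push_cast; ring
    rwa [h1] at h
  have h1 : fspan V m i ⊔ V (i + (((m+1 : ℕ)) : Fin K)) ≤
      fspan V (m+1) i ⊔ fspan V (m+1) (i+1) :=
    sup_le (le_sup_of_le_left (fspan_mono_succ V m i)) (le_sup_of_le_right hVle)
  have h2 : fspan V m (i+1) ≤ fspan V (m+1) i ⊓ fspan V (m+1) (i+1) :=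
    le_inf (fspan_shift_le V m i) (fspan_mono_succ V m (i+1))
  have heq2 := Submodule.finrank_sup_add_finrank_inf_eq (fspan V m i)
      (V (i + (((m+1 : ℕ)) : Fin K)))
  rw [hbot, finrank_bot, add_zero] at heq2
  have ha := Submodule.finrank_mono h1
  have hb := Submodule.finrank_mono h2
  omega

private lemma sum_shift {M : Type*} [AddCommMonoid M] (g : Fin K → M) (c : Fin K) :
    ∑ i : Fin K, g (i + c) = ∑ i : Fin K, g i :=
  Fintype.sum_equiv (Equiv.addRight c) _ _ (fun _ => rfl)

end Aux

theorem stmt_4 {F W : Type*} [Field F] [AddCommGroup W] [Module F W] [FiniteDimensional F W]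
    (K m : ℕ) [NeZero K] (hK : 2 * m + 2 ≤ K)
    (V : Fin K → Submodule F W)
    (α : ℕ → ℕ)
    (hα : ∀ j, α j = ∑ i : Fin K, Module.finrank F ↥(⨆ s : Fin j, V (i + ((s : ℕ) : Fin K))))
    (hindep : ∀ i : Fin K, ∀ j, 2 ≤ j → j ≤ m + 1 →
      (⨆ s : Fin (j - 1), V (i + ((s : ℕ) : Fin K))) ⊓ V (i + (((m + 1 : ℕ)) : Fin K)) = ⊥) :
    ∀ j, 2 ≤ j → j ≤ m + 1 →
      (((m : ℚ) + j) / (m + 1)) * (α 1 : ℚ) ≤ (α j : ℚ) := by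
  intro j hj2 hjm
  have hm1 : 1 ≤ m := by omega
  have hαS : ∀ t, α t = ∑ i : Fin K, finrank F ↥(fspan V t i) := hα
  -- concavity summed
  have hC : ∀ t : ℕ, α (t+2) + α t ≤ α (t+1) + α (t+1) := by
    intro t
    have h := Finset.sum_le_sum (s := (Finset.univ : Finset (Fin K)))
      (fun i _ => key1 V t i)
    rw [Finset.sum_add_distrib, Finset.sum_add_distrib,
      sum_shift (fun x => finrank F ↥(fspan V t x)) 1,
      sum_shift (fun x => finrank F ↥(fspan V (t+1) x)) 1] at h
    rw [hαS (t+2), hαS t, hαS (t+1)]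
    exact h
  -- independence summed
  have hE : α 1 + (α m + α m) ≤ α (m+1) + α (m+1) := by
    have h := Finset.sum_le_sum (s := (Finset.univ : Finset (Fin K)))
      (fun i _ => key2 V m i (by
        have := hindep i (m+1) (by omega) le_rfl
        exact this))
    rw [Finset.sum_add_distrib, Finset.sum_add_distrib, Finset.sum_add_distrib,
      sum_shift (fun x => finrank F ↥(fspan V m x)) 1,
      sum_shift (fun x => finrank F ↥(fspan V (m+1) x)) 1,
      sum_shift (fun x => finrank F ↥(V x)) (((m+1 : ℕ)) : Fin K)] at h
    have hS1 : α 1 = ∑ i : Fin K, finrank F ↥(V i) := by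
      rw [hαS 1]
      exact Finset.sum_congr rfl fun i _ => by rw [fspan_one]
    rw [hαS (m+1), hαS m, hS1]
    omega
  -- cast to ℚ
  have hCq : ∀ t : ℕ, (α (t+2) : ℚ) + α t ≤ 2 * α (t+1) := by
    intro t
    have h := hC t
    have h2 : ((α (t+2) + α t : ℕ) : ℚ) ≤ ((α (t+1) + α (t+1) : ℕ) : ℚ) := by
      exact_mod_cast h
    push_cast at h2
    linarith
  have hEq : (α 1 : ℚ) + 2 * α m ≤ 2 * α (m+1) := by
    have h2 : ((α 1 + (α m + α m) : ℕ) : ℚ) ≤ ((α (m+1) + α (m+1) : ℕ) : ℚ) := by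
      exact_mod_cast hE
    push_cast at h2
    linarith
  -- differences are non-increasing
  have hmono : ∀ a b : ℕ, a ≤ b → (α (b+1) : ℚ) - α b ≤ (α (a+1) : ℚ) - α a := by
    intro a b hab
    induction b, hab using Nat.le_induction with
    | base => exact le_rfl
    | succ b _ ih =>
        have h := hCq b
        linarith
  have hstep : ∀ t : ℕ, 1 ≤ t → t ≤ m + 1 → ((t : ℚ) + 1) * α 1 ≤ 2 * α t := by
    intro t ht1
    induction t, ht1 using Nat.le_induction with
    | base =>
        intro _
        push_cast
        linarith
    | succ t ht ih =>
        intro htm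
        have h1 := ih (by omega)
        have h2 := hmono t m (by omega)
        have h3 : (α 1 : ℚ) ≤ 2 * ((α (m+1) : ℚ) - α m) := by linarith
        push_cast
        push_cast at h1
        linarith
  have h2j : ((j : ℚ) + 1) * α 1 ≤ 2 * α j := hstep j (by omega) hjm
  have hα1 : (0 : ℚ) ≤ (α 1 : ℚ) := by positivity
  have hjq : (2 : ℚ) ≤ (j : ℚ) := by exact_mod_cast hj2
  have hjmq : (j : ℚ) ≤ (m : ℚ) + 1 := by exact_mod_cast hjm
  have hmpos : (0 : ℚ) < (m : ℚ) + 1 := by positivity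
  rw [div_mul_eq_mul_div, div_le_iff₀ hmpos]
  nlinarith [mul_le_mul_of_nonneg_left h2j (le_of_lt hmpos),
    mul_nonneg (mul_nonneg (show (0:ℚ) ≤ (m:ℚ) - 1 by linarith) (show (0:ℚ) ≤ (j:ℚ) - 1 by linarith)) hα1]
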